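/- The allocation produced by the two-user algorithm achieves equal weighted rates: with k_min and α_{k_min} as defined, assigning user 1 the full bins 1,...,k_min−1 plus fraction α_{k_min} of bin k_min, and user 2 fraction 1−α_{k_min} of bin k_min plus the full bins k_min+1,...,K, the resulting rates satisfy R_1 = A_{k_min−1} + α_{k_min} R_{1 k_min} and R_2 = (1−α_{k_min}) R_{2 k_min} + B_{k_min}, and they obey R_1 = γ R_2. -/
import Mathlib


/-- The allocation produced by the two-user algorithm achieves equal weighted rates:
`R₁ = γ R₂`. -/
theorem two_user_algorithm_equal_weighted_rates (K : ℕ) (hK : 1 ≤ K)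
    (γ : ℝ) (hγ : 0 < γ)
    (R1 R2 : ℕ → ℝ)
    (hR1 : ∀ k ∈ Finset.Icc 1 K, 0 < R1 k)
    (hR2 : ∀ k ∈ Finset.Icc 1 K, 0 < R2 k)
    (A B : ℕ → ℝ)
    (hA : ∀ k, A k = ∑ m ∈ Finset.Icc 1 k, R1 m)
    (hB : ∀ k, B k = ∑ m ∈ Finset.Icc (k + 1) K, R2 m)
    (kmin : ℕ) (hk1 : 1 ≤ kmin) (hkK : kmin ≤ K)
    (hge : γ * B kmin ≤ A kmin)
    (hmin : ∀ j, 1 ≤ j → j < kmin → A j < γ * B j)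
    (α R₁ R₂ : ℝ)
    (hα : α = (γ * B (kmin - 1) - A (kmin - 1)) / (R1 kmin + γ * R2 kmin))
    (hR₁ : R₁ = A (kmin - 1) + α * R1 kmin)
    (hR₂ : R₂ = (1 - α) * R2 kmin + B kmin) :
    R₁ = γ * R₂ := by
  have hkmem : kmin ∈ Finset.Icc 1 K := Finset.mem_Icc.mpr ⟨hk1, hkK⟩
  have h1 : 0 < R1 kmin := hR1 _ hkmem
  have h2 : 0 < R2 kmin := hR2 _ hkmem
  have hden : R1 kmin + γ * R2 kmin ≠ 0 := by positivity
  have hBsplit : B (kmin - 1) = R2 kmin + B kmin := by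
    rw [hB, hB]
    have h : kmin - 1 + 1 = kmin := Nat.succ_pred_eq_of_pos hk1
    rw [h, Finset.Icc_eq_cons_Ioc hkK, Finset.sum_cons, ← Finset.Icc_add_one_left_eq_Ioc]
  have hαeq : α * (R1 kmin + γ * R2 kmin) = γ * B (kmin - 1) - A (kmin - 1) := by
    rw [hα, div_mul_cancel₀ _ hden]
  rw [hR₁, hR₂, hBsplit] at *
  nlinarith [hαeq]
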